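/- Let R be a constraint network in which every constraint has arity at most r, and suppose R is strongly (2(r−1)+1)-consistent. If R is tree convex, then R is globally consistent. -/

import Mathlib

/-- A constraint: a nonempty scope of variables and a set of allowed tuples
(total assignments whose restriction to the scope determines membership). -/
structure Constraint (V : Type) (α : Type) where
  scope : Finset V
  scope_nonempty : scope.Nonempty
  allowed : Set (V → α)
  allowed_ext : ∀ f g : V → α, (∀ v ∈ scope, f v = g v) → f ∈ allowed → g ∈ allowed

/-- A constraint network: a finite nonempty domain for each variable and a finite
set of constraints, no two of which have the same scope. -/
structure Network (V : Type) (α : Type) [Fintype V] [DecidableEq V] where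
  dom : V → Finset α
  dom_nonempty : ∀ v, (dom v).Nonempty
  cons : Set (Constraint V α)
  cons_finite : cons.Finite
  scope_inj : ∀ c ∈ cons, ∀ c' ∈ cons, c.scope = c'.scope → c = c'

namespace Network

variable {V α : Type} [Fintype V] [DecidableEq V]

/-- `f` is an instantiation of the variables `Y`: each variable of `Y` gets a value
from its domain. -/
def Inst (R : Network V α) (Y : Set V) (f : V → α) : Prop :=
  ∀ v ∈ Y, f v ∈ R.dom v

/-- `f` is a consistent instantiation of the variables `Y`: it is an instantiation of
`Y` satisfying every constraint whose scope is contained in `Y`. -/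
def ConsistentOn (R : Network V α) (Y : Set V) (f : V → α) : Prop :=
  R.Inst Y f ∧ ∀ c ∈ R.cons, (c.scope : Set V) ⊆ Y → f ∈ c.allowed

/-- `R` is `k`-consistent: every consistent instantiation of any `k - 1` distinct
variables extends consistently to any further variable. -/
def KConsistent (R : Network V α) (k : ℕ) : Prop :=
  ∀ (Y : Finset V) (f : V → α), Y.card + 1 = k → R.ConsistentOn ↑Y f →
    ∀ x ∉ Y, ∃ u ∈ R.dom x,
      R.ConsistentOn ↑(insert x Y) (Function.update f x u)

/-- `R` is strongly `k`-consistent: `j`-consistent for every `j ≤ k`. -/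
def StronglyKConsistent (R : Network V α) (k : ℕ) : Prop :=
  ∀ j ≤ k, R.KConsistent j

/-- `R` is globally consistent: strongly `n`-consistent, `n` the number of variables. -/
def GloballyConsistent (R : Network V α) : Prop :=
  R.StronglyKConsistent (Fintype.card V)

/-- The extension set of an instantiation `f` (of `c.scope − {x}`) to `x` with
respect to the constraint `c`: the values `b` of the domain of `x` such that the
extended instantiation satisfies `c`. -/
def extSet (R : Network V α) (c : Constraint V α) (x : V) (f : V → α) : Set α :=
  {b | b ∈ R.dom x ∧ Function.update f x b ∈ c.allowed}

/-- `c` is a relevant constraint on `x` with respect to `Y`: its scope contains `x`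
and its other variables all belong to `Y`. -/
def Relevant (R : Network V α) (c : Constraint V α) (x : V) (Y : Set V) : Prop :=
  c ∈ R.cons ∧ x ∈ c.scope ∧ (↑(c.scope.erase x) : Set V) ⊆ Y

/-- `c` is properly `m`-tight with respect to `x`: every extension set to `x` has at
most `m` elements. -/
def ProperlyTightWrt (R : Network V α) (c : Constraint V α) (x : V) (m : ℕ) : Prop :=
  ∀ f : V → α, R.Inst ↑(c.scope.erase x) f → (R.extSet c x f).ncard ≤ m

/-- `c` is properly `m`-tight: properly `m`-tight with respect to each of its
variables. -/
def ProperlyTight (R : Network V α) (c : Constraint V α) (m : ℕ) : Prop :=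
  ∀ x ∈ c.scope, R.ProperlyTightWrt c x m

/-- `R` (with `n` variables) is weakly `m`-tight at level `k`: for every set `Y` of
`l` variables, `k ≤ l < n`, and every variable `x ∉ Y`, some relevant constraint on
`x` with respect to `Y` is properly `m`-tight. -/
def WeaklyTight (R : Network V α) (m k : ℕ) : Prop :=
  ∀ Y : Finset V, k ≤ Y.card → Y.card < Fintype.card V →
    ∀ x ∉ Y, ∃ c, R.Relevant c x ↑Y ∧ R.ProperlyTight c m

/-- `R` is tree convex: there is a tree on the union of all the domains under which
every nonempty extension set of every constraint is tree convex (induces a connected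
subgraph). -/
def TreeConvexNet (R : Network V α) : Prop :=
  ∃ T : SimpleGraph {a : α // a ∈ ⋃ v, (R.dom v : Set α)},
    T.IsTree ∧
      ∀ c ∈ R.cons, ∀ x ∈ c.scope, ∀ f : V → α,
        R.Inst ↑(c.scope.erase x) f → (R.extSet c x f).Nonempty →
          (T.induce (Subtype.val ⁻¹' R.extSet c x f)).Connected

/-- `R` is relationally `m`-consistent: for any `m` distinct constraints, any common
variable `x` of their scopes, and any consistent instantiation of the union of their
scopes minus `x`, some value of the domain of `x` extends it to satisfy all `m`
constraints. -/
def RelConsistent (R : Network V α) (m : ℕ) : Prop :=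
  ∀ cs : Fin m → Constraint V α, Function.Injective cs →
    (∀ i, cs i ∈ R.cons) → ∀ x : V, (∀ i, x ∈ (cs i).scope) →
      ∀ f : V → α, R.ConsistentOn ((⋃ i, ((cs i).scope : Set V)) \ {x}) f →
        ∃ u ∈ R.dom x, ∀ i, Function.update f x u ∈ (cs i).allowed

/-- `R` is strongly relationally `m`-consistent. -/
def StronglyRelConsistent (R : Network V α) (m : ℕ) : Prop :=
  ∀ j ≤ m, R.RelConsistent j

end Network


open SimpleGraph

section Helly

variable {β : Type*} [DecidableEq β] {T : SimpleGraph β}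

/-- `A` is path-closed (convex) in `T`. -/
def TreeConvexSet (T : SimpleGraph β) (A : Set β) : Prop :=
  ∀ ⦃x⦄, x ∈ A → ∀ ⦃y⦄, y ∈ A → ∀ p : T.Walk x y, p.IsPath → ∀ z ∈ p.support, z ∈ A

lemma treeConvexSet_of_connected (hT : T.IsTree) {A : Set β}
    (h : (T.induce A).Connected) : TreeConvexSet T A := by
  intro x hx y hy p hp z hz
  obtain ⟨w0⟩ := h.preconnected ⟨x, hx⟩ ⟨y, hy⟩
  let w : T.Walk x y := w0.map (SimpleGraph.Embedding.induce A).toHom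
  have hsup : ∀ a ∈ w.support, a ∈ A := by
    intro a ha
    have ha' : a ∈ (w0.map (SimpleGraph.Embedding.induce A).toHom).support := ha
    rw [Walk.support_map, List.mem_map] at ha'
    obtain ⟨s, _, rfl⟩ := ha'
    exact s.2
  have huniq : p = (w.toPath : T.Walk x y) := by
    have := hT.IsAcyclic.path_unique ⟨p, hp⟩ w.toPath
    exact congrArg Subtype.val this
  rw [huniq] at hz
  exact hsup z (Walk.support_bypass_subset w hz)

lemma helly_cross (hT : T.IsTree) {A B C : Set β}
    (hA : TreeConvexSet T A) (hB : TreeConvexSet T B) (hC : TreeConvexSet T C)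
    {a : β} (haB : a ∈ B) (haC : a ∈ C) :
    ∀ {u v : β} (w : T.Walk u v), (∀ z ∈ w.support, z ∈ A) →
      (∀ z ∈ w.support, z ∈ B ∪ C) → u ∈ C → v ∈ B →
      (A ∩ (B ∩ C)).Nonempty := by
  intro u v w
  induction w with
  | nil =>
    intro hsA _ hu hv
    exact ⟨_, hsA _ (by simp), hv, hu⟩
  | @cons u x v h w ih =>
    intro hsA hsBC hu hv
    by_cases huB : u ∈ B
    · exact ⟨u, hsA u (by simp), huB, hu⟩

    by_cases hxC : x ∈ C
    · exact ih (fun z hz => hsA z (by simp [hz])) (fun z hz => hsBC z (by simp [hz])) hxC hv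
    have hxA : x ∈ A := hsA x (by simp)
    have hxB : x ∈ B := by
      rcases hsBC x (by simp) with hb | hc
      · exact hb
      · exact absurd hc hxC
    obtain ⟨r0⟩ := hT.isConnected x a
    by_cases huR : u ∈ (r0.toPath : T.Walk x a).support
    · exact absurd (hB hxB haB _ r0.toPath.2 u huR) huB
    · have hpath : (Walk.cons h (r0.toPath : T.Walk x a)).IsPath :=
        r0.toPath.2.cons huR
      have : x ∈ C := hC hu haC _ hpath x (by simp)
      exact absurd this hxC

lemma helly3 (hT : T.IsTree) {A B C : Set β}
    (hA : TreeConvexSet T A) (hB : TreeConvexSet T B) (hC : TreeConvexSet T C)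
    (hab : (A ∩ B).Nonempty) (hac : (A ∩ C).Nonempty) (hbc : (B ∩ C).Nonempty) :
    (A ∩ (B ∩ C)).Nonempty := by
  obtain ⟨c, hcA, hcB⟩ := hab
  obtain ⟨b, hbA, hbC⟩ := hac
  obtain ⟨a, haB, haC⟩ := hbc
  obtain ⟨w1⟩ := hT.isConnected b a
  obtain ⟨w2⟩ := hT.isConnected a c
  let p1 : T.Walk b a := w1.toPath
  let p2 : T.Walk a c := w2.toPath
  have hp1 : ∀ z ∈ p1.support, z ∈ C := fun z hz => hC hbC haC p1 w1.toPath.2 z hz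
  have hp2 : ∀ z ∈ p2.support, z ∈ B := fun z hz => hB haB hcB p2 w2.toPath.2 z hz
  let q : T.Walk b c := (p1.append p2).bypass
  have hqA : ∀ z ∈ q.support, z ∈ A :=
    fun z hz => hA hbA hcA q ((p1.append p2).bypass_isPath) z hz
  have hqBC : ∀ z ∈ q.support, z ∈ B ∪ C := by
    intro z hz
    have := Walk.support_bypass_subset (p1.append p2) hz
    rw [Walk.mem_support_append_iff] at this
    rcases this with h1 | h2
    · exact Or.inr (hp1 z h1)
    · exact Or.inl (hp2 z h2)
  exact helly_cross hT hA hB hC haB haC q hqA hqBC hbC hcB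

lemma helly_aux (hT : T.IsTree) :
    ∀ (n : ℕ) (𝒜 : Finset (Set β)), 𝒜.card ≤ n → 𝒜.Nonempty →
      (∀ A ∈ 𝒜, TreeConvexSet T A) → (∀ A ∈ 𝒜, ∀ B ∈ 𝒜, (A ∩ B).Nonempty) →
      ∃ z, ∀ A ∈ 𝒜, z ∈ A := by
  classical
  intro n
  induction n with
  | zero =>
    intro 𝒜 hcard hne _ _
    have := Finset.card_pos.2 hne
    omega
  | succ n ih =>
    intro 𝒜 hcard hne hconv hpair
    obtain ⟨A, hAmem⟩ := hne
    by_cases hs : (𝒜.erase A).Nonempty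
    · set ℬ : Finset (Set β) := (𝒜.erase A).image (fun B => A ∩ B) with hℬ
      have hBcard : ℬ.card ≤ n := by
        have h1 : ℬ.card ≤ (𝒜.erase A).card := Finset.card_image_le
        have h2 := Finset.card_erase_of_mem hAmem
        have h3 := Finset.card_pos.2 ⟨A, hAmem⟩
        omega
      have hconv' : ∀ X ∈ ℬ, TreeConvexSet T X := by
        intro X hX
        obtain ⟨B, hBmem, rfl⟩ := Finset.mem_image.1 hX
        have hBm := Finset.mem_of_mem_erase hBmem
        intro x hx y hy p hp z hz
        exact ⟨hconv A hAmem hx.1 hy.1 p hp z hz, hconv B hBm hx.2 hy.2 p hp z hz⟩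
      have hpair' : ∀ X ∈ ℬ, ∀ Y ∈ ℬ, (X ∩ Y).Nonempty := by
        intro X hX Y hY
        obtain ⟨B, hB, rfl⟩ := Finset.mem_image.1 hX
        obtain ⟨C, hC, rfl⟩ := Finset.mem_image.1 hY
        have hBm := Finset.mem_of_mem_erase hB
        have hCm := Finset.mem_of_mem_erase hC
        obtain ⟨z, hzA, hzB, hzC⟩ := helly3 hT (hconv A hAmem) (hconv B hBm) (hconv C hCm)
          (hpair A hAmem B hBm) (hpair A hAmem C hCm) (hpair B hBm C hCm)
        exact ⟨z, ⟨hzA, hzB⟩, hzA, hzC⟩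
      obtain ⟨z, hz⟩ := ih ℬ hBcard (hs.image _) hconv' hpair'
      refine ⟨z, fun X hX => ?_⟩
      by_cases hXA : X = A
      · subst hXA
        obtain ⟨B, hBmem⟩ := hs
        exact (hz _ (Finset.mem_image_of_mem _ hBmem)).1
      · exact (hz _ (Finset.mem_image_of_mem _ (Finset.mem_erase.2 ⟨hXA, hX⟩))).2
    · obtain ⟨z, hz, _⟩ := hpair A hAmem A hAmem
      refine ⟨z, fun X hX => ?_⟩
      have hXA : X = A := by
        by_contra h
        exact hs ⟨X, Finset.mem_erase.2 ⟨h, hX⟩⟩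
      subst hXA; exact hz

end Helly

/-- **Tree Convexity.**  A tree convex constraint network with constraints of arity
at most `r` that is strongly `(2(r−1)+1)`-consistent is globally consistent. -/


theorem Network.treeConvex_globallyConsistent
    {V α : Type} [Fintype V] [DecidableEq V] (R : Network V α) (r : ℕ)
    (harity : ∀ c ∈ R.cons, c.scope.card ≤ r)
    (hsc : R.StronglyKConsistent (2 * (r - 1) + 1))
    (htc : R.TreeConvexNet) :
    R.GloballyConsistent := by
  classical
  intro j _hj Y f _hcard hf x hx
  obtain ⟨T, hT, hTC⟩ := htc
  -- extending over small subsets of Y using strong consistency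
  have key : ∀ Z : Finset V, (↑Z : Set V) ⊆ ↑Y → Z.card ≤ 2 * (r - 1) →
      ∃ u ∈ R.dom x, R.ConsistentOn ↑(insert x Z) (Function.update f x u) := by
    intro Z hZY hZc
    have hxZ : x ∉ Z := fun h => hx (by exact_mod_cast hZY (by exact_mod_cast h))
    have hfZ : R.ConsistentOn ↑Z f :=
      ⟨fun v hv => hf.1 v (hZY hv), fun c hc hsub => hf.2 c hc (hsub.trans hZY)⟩
    exact hsc (Z.card + 1) (by omega) Z f rfl hfZ x hxZ
  set E : Constraint V α → Set α := fun c => R.extSet c x f with hE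
  have hFfin : {c | R.Relevant c x ↑Y}.Finite := R.cons_finite.subset fun c hc => hc.1
  set F : Finset (Constraint V α) := hFfin.toFinset with hF
  have memF : ∀ {c}, c ∈ F ↔ R.Relevant c x ↑Y := fun {c} => Set.Finite.mem_toFinset _
  -- each relevant constraint has nonempty extension set
  have claim1 : ∀ c, R.Relevant c x ↑Y → (E c).Nonempty := by
    intro c hcrel
    obtain ⟨hc1, hc2, hc3⟩ := hcrel
    have hr1 : 1 ≤ r := le_trans (Finset.card_pos.2 c.scope_nonempty) (harity c hc1)
    have hZc : (c.scope.erase x).card ≤ 2 * (r - 1) := by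
      have h1 := Finset.card_erase_of_mem hc2
      have h2 := harity c hc1
      omega
    obtain ⟨u, hu, hcons⟩ := key (c.scope.erase x) hc3 hZc
    refine ⟨u, hu, hcons.2 c hc1 ?_⟩
    intro v hv
    simp only [Finset.coe_insert, Set.mem_insert_iff, Finset.mem_coe, Finset.mem_erase]
    by_cases h : v = x
    · exact Or.inl h
    · exact Or.inr ⟨h, by exact_mod_cast hv⟩
  -- extension sets of relevant constraints pairwise intersect
  have claim2 : ∀ c, R.Relevant c x ↑Y → ∀ c', R.Relevant c' x ↑Y →
      (E c ∩ E c').Nonempty := by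
    intro c hcrel c' hcrel'
    obtain ⟨hc1, hc2, hc3⟩ := hcrel
    obtain ⟨hc1', hc2', hc3'⟩ := hcrel'
    have hr1 : 1 ≤ r := le_trans (Finset.card_pos.2 c.scope_nonempty) (harity c hc1)
    set Z : Finset V := (c.scope ∪ c'.scope).erase x with hZ
    have hZY : (↑Z : Set V) ⊆ ↑Y := by
      intro v hv
      simp only [hZ, Finset.coe_erase, Set.mem_diff, Finset.mem_coe, Finset.mem_union,
        Set.mem_singleton_iff] at hv
      rcases hv.1 with h | h
      · exact hc3 (by simp [Finset.mem_coe, Finset.mem_erase, hv.2, h])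
      · exact hc3' (by simp [Finset.mem_coe, Finset.mem_erase, hv.2, h])
    have hZc : Z.card ≤ 2 * (r - 1) := by
      have hdist : Z = c.scope.erase x ∪ c'.scope.erase x := by
        simp [hZ, Finset.erase_union_distrib]
      have h1 : Z.card ≤ (c.scope.erase x).card + (c'.scope.erase x).card := by
        rw [hdist]; exact Finset.card_union_le _ _
      have h2 := Finset.card_erase_of_mem hc2
      have h3 := Finset.card_erase_of_mem hc2'
      have h4 := harity c hc1
      have h5 := harity c' hc1'
      omega
    obtain ⟨u, hu, hcons⟩ := key Z hZY hZc
    have hsub : ∀ (d : Constraint V α), x ∈ d.scope → d.scope ⊆ c.scope ∪ c'.scope →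
        (↑d.scope : Set V) ⊆ ↑(insert x Z) := by
      intro d _ hd v hv
      simp only [Finset.coe_insert, Set.mem_insert_iff, Finset.mem_coe, hZ, Finset.mem_erase,
        Finset.mem_union]
      by_cases h : v = x
      · exact Or.inl h
      · refine Or.inr ⟨h, ?_⟩
        have : v ∈ c.scope ∪ c'.scope := hd (by exact_mod_cast hv)
        simpa [Finset.mem_union] using this
    exact ⟨u, ⟨hu, hcons.2 c hc1 (hsub c hc2 Finset.subset_union_left)⟩,
      ⟨hu, hcons.2 c' hc1' (hsub c' hc2' Finset.subset_union_right)⟩⟩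
  -- find a common value for all relevant constraints
  have main : ∃ u ∈ R.dom x, ∀ c, R.Relevant c x ↑Y → u ∈ E c := by
    by_cases hFne : F.Nonempty
    · have memU : ∀ {u : α}, u ∈ R.dom x → u ∈ ⋃ v, ((R.dom v : Finset α) : Set α) := by
        intro u hu
        exact Set.mem_iUnion.2 ⟨x, by exact_mod_cast hu⟩
      set 𝒜 : Finset (Set {a : α // a ∈ ⋃ v, ((R.dom v : Finset α) : Set α)}) := F.image (fun c => Subtype.val ⁻¹' E c) with h𝒜
      have hconv : ∀ A ∈ 𝒜, TreeConvexSet T A := by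
        intro A hA
        obtain ⟨c, hcF, rfl⟩ := Finset.mem_image.1 hA
        have hcrel := memF.1 hcF
        obtain ⟨hc1, hc2, hc3⟩ := hcrel
        have hinst : R.Inst ↑(c.scope.erase x) f := fun v hv => hf.1 v (hc3 hv)
        exact treeConvexSet_of_connected hT
          (hTC c hc1 x hc2 f hinst (claim1 c (memF.1 hcF)))
      have hpair : ∀ A ∈ 𝒜, ∀ B ∈ 𝒜, (A ∩ B).Nonempty := by
        intro A hA B hB
        obtain ⟨c, hcF, rfl⟩ := Finset.mem_image.1 hA
        obtain ⟨c', hcF', rfl⟩ := Finset.mem_image.1 hB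
        obtain ⟨u, hu1, hu2⟩ := claim2 c (memF.1 hcF) c' (memF.1 hcF')
        exact ⟨⟨u, memU hu1.1⟩, hu1, hu2⟩
      obtain ⟨z, hz⟩ := helly_aux hT 𝒜.card 𝒜 le_rfl (hFne.image _) hconv hpair
      obtain ⟨c0, hc0⟩ := hFne
      have hz0 : (z : α) ∈ E c0 := hz _ (Finset.mem_image_of_mem _ hc0)
      exact ⟨z, hz0.1, fun c hcrel => hz _ (Finset.mem_image_of_mem _ (memF.2 hcrel))⟩
    · obtain ⟨u, hu⟩ := R.dom_nonempty x
      exact ⟨u, hu, fun c hcrel => absurd ⟨c, memF.2 hcrel⟩ hFne⟩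
  obtain ⟨u, hu, hurel⟩ := main
  refine ⟨u, hu, ?_, ?_⟩
  · intro v hv
    simp only [Finset.coe_insert, Set.mem_insert_iff, Finset.mem_coe] at hv
    rcases hv with rfl | hv
    · simpa using hu
    · have hvx : v ≠ x := fun h => hx (h ▸ hv)
      rw [Function.update_of_ne hvx]
      exact hf.1 v hv
  · intro c hc hsub
    by_cases hxc : x ∈ c.scope
    · have hrel : R.Relevant c x ↑Y := by
        refine ⟨hc, hxc, ?_⟩
        intro v hv
        simp only [Finset.mem_coe, Finset.coe_erase, Set.mem_diff] at hv ⊢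
        have hv1 : v ∈ c.scope := by
          have := hv
          exact this.1
        have hv2 : v ≠ x := by
          have := hv
          simp only [Finset.coe_erase, Set.mem_diff, Set.mem_singleton_iff,
            Finset.mem_coe] at this
          exact this.2
        have := hsub (by exact_mod_cast hv1)
        simp only [Finset.coe_insert, Set.mem_insert_iff, Finset.mem_coe] at this
        rcases this with h | h
        · exact absurd h hv2
        · exact h
      exact (hurel c hrel).2
    · have hsub' : (↑c.scope : Set V) ⊆ ↑Y := by
        intro v hv
        have := hsub hv
        simp only [Finset.coe_insert, Set.mem_insert_iff, Finset.mem_coe] at this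
        rcases this with rfl | h
        · exact absurd (by exact_mod_cast hv) hxc
        · exact h
      refine c.allowed_ext f _ (fun v hv => ?_) (hf.2 c hc hsub')
      exact (Function.update_of_ne (fun h : v = x => hxc (by rwa [h] at hv)) u f).symm
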